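/- Let V be a finite nonempty set and p : V → ℝ with p(k) > 0 for all k ∈ V and Σ_{k ∈ V} p(k) = 1. Let (U_k)_{k ∈ V} be independent random variables each with the standard Gumbel distribution. Then for every j ∈ V, P(∀ k ≠ j, log p(j) + U_j > log p(k) + U_k) = p(j). -/

import Mathlib

open MeasureTheory ProbabilityTheory
open Real Set Filter Topology

/-- The standard Gumbel distribution on `ℝ`: the Borel probability measure with density
`x ↦ exp(−x − exp(−x))` with respect to Lebesgue measure. -/
noncomputable def stdGumbel : Measure ℝ :=
  volume.withDensity fun x => ENNReal.ofReal (Real.exp (-x - Real.exp (-x)))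

lemma gm_hasDerivAt (c : ℝ) (hc : 0 < c) (x : ℝ) :
    HasDerivAt (fun y => -Real.exp (-(c * Real.exp y)) / c)
      (Real.exp x * Real.exp (-(c * Real.exp x))) x := by
  have h1 : HasDerivAt (fun y => -(c * Real.exp y)) (-(c * Real.exp x)) x :=
    ((Real.hasDerivAt_exp x).const_mul c).neg
  have h2 := (Real.hasDerivAt_exp (-(c * Real.exp x))).comp x h1
  have h3 := (h2.neg).div_const c
  refine h3.congr_deriv ?_
  rw [div_eq_iff hc.ne']
  ring

lemma gm_tendsto_top (c : ℝ) (hc : 0 < c) :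
    Tendsto (fun y => -Real.exp (-(c * Real.exp y)) / c) atTop (𝓝 0) := by
  have h1 : Tendsto (fun y : ℝ => -(c * Real.exp y)) atTop atBot :=
    tendsto_neg_atTop_atBot.comp (Real.tendsto_exp_atTop.const_mul_atTop hc)
  have h2 := (Real.tendsto_exp_atBot.comp h1).neg.div_const c
  simpa using h2

lemma gm_tendsto_bot (c : ℝ) (hc : 0 < c) :
    Tendsto (fun y => -Real.exp (-(c * Real.exp y)) / c) atBot (𝓝 (-1 / c)) := by
  have h1 : Tendsto (fun y : ℝ => -(c * Real.exp y)) atBot (𝓝 0) := by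
    simpa using (Real.tendsto_exp_atBot.const_mul c).neg
  have h2 := ((Real.continuous_exp.tendsto 0).comp h1).neg.div_const c
  simpa using h2

lemma gm_integral_Ioi (c : ℝ) (hc : 0 < c) (b : ℝ) :
    ∫ x in Ioi b, Real.exp x * Real.exp (-(c * Real.exp x)) =
      Real.exp (-(c * Real.exp b)) / c := by
  have := integral_Ioi_of_hasDerivAt_of_nonneg' (a := b)
    (fun x _ => gm_hasDerivAt c hc x)
    (fun x _ => by positivity) (gm_tendsto_top c hc)
  rw [this]; ring

lemma gm_integrableOn_Ioi (c : ℝ) (hc : 0 < c) (b : ℝ) :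
    IntegrableOn (fun x => Real.exp x * Real.exp (-(c * Real.exp x))) (Ioi b) :=
  integrableOn_Ioi_deriv_of_nonneg' (fun x _ => gm_hasDerivAt c hc x)
    (fun x _ => by positivity) (gm_tendsto_top c hc)

lemma gm_integrableOn_Iic (c : ℝ) (hc : 0 < c) (b : ℝ) :
    IntegrableOn (fun x => Real.exp x * Real.exp (-(c * Real.exp x))) (Iic b) := by
  refine Integrable.mono (integrableOn_exp_Iic b) ?_ ?_
  · exact (Real.measurable_exp.mul
      ((Real.measurable_exp.const_mul c).neg.exp)).aestronglyMeasurable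
  · filter_upwards with x
    rw [Real.norm_eq_abs, Real.norm_eq_abs, abs_of_pos (Real.exp_pos x),
      abs_of_pos (by positivity)]
    calc Real.exp x * Real.exp (-(c * Real.exp x))
        ≤ Real.exp x * 1 := by
          gcongr
          exact Real.exp_le_one_iff.2 (neg_nonpos_of_nonneg (by positivity))
      _ = Real.exp x := mul_one _

lemma gm_integral_Iic (c : ℝ) (hc : 0 < c) (b : ℝ) :
    ∫ x in Iic b, Real.exp x * Real.exp (-(c * Real.exp x)) =
      (1 - Real.exp (-(c * Real.exp b))) / c := by
  have := integral_Iic_of_hasDerivAt_of_tendsto' (fun x _ => gm_hasDerivAt c hc x)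
    (gm_integrableOn_Iic c hc b) (gm_tendsto_bot c hc)
  rw [this]; ring

lemma gm_neg_integrableOn_Iic (c : ℝ) (hc : 0 < c) (a : ℝ) :
    IntegrableOn (fun x => Real.exp (-x) * Real.exp (-(c * Real.exp (-x)))) (Iic a) := by
  have h := (MeasurePreserving.integrableOn_comp_preimage
    (Measure.measurePreserving_neg (volume : Measure ℝ))
    (Homeomorph.neg ℝ).measurableEmbedding
    (f := fun x => Real.exp x * Real.exp (-(c * Real.exp x))) (s := Ici (-a))).2
    ((integrableOn_Ici_iff_integrableOn_Ioi).2 (gm_integrableOn_Ioi c hc (-a)))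
  have hs : (fun x : ℝ => -x) ⁻¹' (Ici (-a)) = Iic a := by
    ext x; simp
  rw [hs] at h
  exact h

lemma gm_neg_integrableOn_Ioi (c : ℝ) (hc : 0 < c) (a : ℝ) :
    IntegrableOn (fun x => Real.exp (-x) * Real.exp (-(c * Real.exp (-x)))) (Ioi a) := by
  have h := (MeasurePreserving.integrableOn_comp_preimage
    (Measure.measurePreserving_neg (volume : Measure ℝ))
    (Homeomorph.neg ℝ).measurableEmbedding
    (f := fun x => Real.exp x * Real.exp (-(c * Real.exp x))) (s := Iio (-a))).2
    ((gm_integrableOn_Iic c hc (-a)).mono_set Iio_subset_Iic_self)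
  have hs : (fun x : ℝ => -x) ⁻¹' (Iio (-a)) = Ioi a := by
    ext x; simp
  rw [hs] at h
  exact h

lemma gm_neg_integrable (c : ℝ) (hc : 0 < c) :
    Integrable (fun x => Real.exp (-x) * Real.exp (-(c * Real.exp (-x)))) := by
  rw [← integrableOn_univ, ← Set.Iic_union_Ioi (a := (0:ℝ))]
  exact (gm_neg_integrableOn_Iic c hc 0).union (gm_neg_integrableOn_Ioi c hc 0)

lemma gm_neg_integral_Iic (c : ℝ) (hc : 0 < c) (a : ℝ) :
    ∫ x in Iic a, Real.exp (-x) * Real.exp (-(c * Real.exp (-x))) =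
      Real.exp (-(c * Real.exp (-a))) / c := by
  have := integral_comp_neg_Iic a (fun x => Real.exp x * Real.exp (-(c * Real.exp x)))
  rw [this, gm_integral_Ioi c hc (-a)]

lemma gm_neg_integral (c : ℝ) (hc : 0 < c) :
    ∫ x, Real.exp (-x) * Real.exp (-(c * Real.exp (-x))) = 1 / c := by
  rw [← intervalIntegral.integral_Iic_add_Ioi (b := (0:ℝ)) (gm_neg_integrableOn_Iic c hc 0)
    (gm_neg_integrableOn_Ioi c hc 0)]
  have h1 := gm_neg_integral_Iic c hc 0
  have h2 : ∫ x in Ioi (0:ℝ), Real.exp (-x) * Real.exp (-(c * Real.exp (-x))) =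
      (1 - Real.exp (-(c * Real.exp (0:ℝ)))) / c := by
    have := integral_comp_neg_Ioi (0:ℝ) (fun x => Real.exp x * Real.exp (-(c * Real.exp x)))
    rw [this, neg_zero, gm_integral_Iic c hc 0]
  rw [h1, h2]
  simp
  ring


lemma gm_lintegral_ofReal (c : ℝ) (hc : 0 < c) :
    ∫⁻ x, ENNReal.ofReal (Real.exp (-x) * Real.exp (-(c * Real.exp (-x)))) =
      ENNReal.ofReal (1 / c) := by
  rw [← ofReal_integral_eq_lintegral_ofReal (gm_neg_integrable c hc)
    (Filter.Eventually.of_forall fun x => by positivity), gm_neg_integral c hc]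

lemma stdGumbel_Iio (a : ℝ) :
    stdGumbel (Iio a) = ENNReal.ofReal (Real.exp (-Real.exp (-a))) := by
  rw [stdGumbel, withDensity_apply _ measurableSet_Iio,
    Measure.restrict_congr_set Iio_ae_eq_Iic,
    ← ofReal_integral_eq_lintegral_ofReal
      (((gm_neg_integrableOn_Iic 1 one_pos a).congr_fun
        (fun x _ => by beta_reduce; rw [← Real.exp_add]; ring_nf) measurableSet_Iic))
      (Filter.Eventually.of_forall fun x => (Real.exp_pos _).le)]
  have := gm_neg_integral_Iic 1 one_pos a
  rw [show ∫ x in Iic a, Real.exp (-x - Real.exp (-x)) =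
      ∫ x in Iic a, Real.exp (-x) * Real.exp (-(1 * Real.exp (-x))) from
    setIntegral_congr_fun measurableSet_Iic (fun x _ => by rw [← Real.exp_add]; ring_nf),
    this]
  norm_num

/-- **The Gumbel-max trick.** If `p` is a probability vector on a finite nonempty set `V` with
positive entries and `(U_k)_{k ∈ V}` are independent standard Gumbel random variables, then for
every `j ∈ V` the probability that `log p j + U j` strictly dominates all the other
`log p k + U k` equals `p j`. -/
theorem gumbel_max_trick
    {V : Type*} [Fintype V] [Nonempty V]
    (p : V → ℝ) (hp : ∀ k, 0 < p k) (hps : ∑ k, p k = 1)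
    {Ω : Type*} [MeasurableSpace Ω] (P : Measure Ω) [IsProbabilityMeasure P]
    (U : V → Ω → ℝ) (hUm : ∀ k, Measurable (U k))
    (hindep : iIndepFun U P)
    (hgumbel : ∀ k, P.map (U k) = stdGumbel) (j : V) :
    P {ω | ∀ k ≠ j, Real.log (p k) + U k ω < Real.log (p j) + U j ω} =
      ENNReal.ofReal (p j) := by
  classical
  haveI hprob : IsProbabilityMeasure stdGumbel :=
    hgumbel j ▸ Measure.isProbabilityMeasure_map (hUm j).aemeasurable
  -- step 1: joint law is the product measure
  have hmeas : Measurable (fun ω k => U k ω) := measurable_pi_lambda _ hUm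
  have hmap : P.map (fun ω k => U k ω) = Measure.pi (fun _ : V => stdGumbel) := by
    refine (Measure.pi_eq fun s hs => ?_).symm
    rw [Measure.map_apply hmeas (MeasurableSet.univ_pi hs)]
    have hpre : (fun ω k => U k ω) ⁻¹' (Set.univ.pi s) = ⋂ k ∈ Finset.univ, U k ⁻¹' s k := by
      ext ω; simp [Set.mem_univ_pi]
    rw [hpre, hindep.measure_inter_preimage_eq_mul Finset.univ (fun i _ => hs i)]
    exact Finset.prod_congr rfl fun k _ => by
      rw [← Measure.map_apply (hUm k) (hs k), hgumbel k]
  -- step 2: rewrite the event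
  set T : Set (V → ℝ) :=
    {u | ∀ k, k ≠ j → Real.log (p k) + u k < Real.log (p j) + u j} with hT
  have hTmeas : MeasurableSet T := by
    have : T = ⋂ k, {u : V → ℝ | k ≠ j → Real.log (p k) + u k < Real.log (p j) + u j} := by
      ext u; simp [hT]
    rw [this]
    refine MeasurableSet.iInter fun k => ?_
    by_cases hk : k = j
    · simp [hk]
    · have : {u : V → ℝ | k ≠ j → Real.log (p k) + u k < Real.log (p j) + u j}
          = {u : V → ℝ | Real.log (p k) + u k < Real.log (p j) + u j} := by
        ext u; simp [hk]
      rw [this]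
      exact measurableSet_lt (measurable_const.add (measurable_pi_apply k))
        (measurable_const.add (measurable_pi_apply j))
  have hev : {ω | ∀ k ≠ j, Real.log (p k) + U k ω < Real.log (p j) + U j ω}
      = (fun ω k => U k ω) ⁻¹' T := rfl
  rw [hev, ← Measure.map_apply hmeas hTmeas, hmap]
  -- step 3: split off coordinate j
  letI D : DecidablePred (fun k : V => k = j) := Classical.decPred _
  letI F1 : Fintype {k : V // k = j} := Subtype.fintype _
  letI : Unique {k : V // k = j} := ⟨⟨⟨j, rfl⟩⟩, fun a => Subtype.ext a.2⟩
  set μ' : Measure ({k : V // ¬ k = j} → ℝ) :=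
    Measure.pi (fun _ => stdGumbel) with hμ'
  set S₂ : Set (ℝ × ({k : V // ¬ k = j} → ℝ)) :=
    {q | ∀ k : {k : V // ¬ k = j}, Real.log (p k.1) + q.2 k < Real.log (p j) + q.1} with hS₂
  have hS₂meas : MeasurableSet S₂ := by
    have : S₂ = ⋂ k : {k : V // ¬ k = j},
        {q : ℝ × ({k : V // ¬ k = j} → ℝ) |
          Real.log (p k.1) + q.2 k < Real.log (p j) + q.1} := by
      ext q; simp [hS₂]
    rw [this]
    refine MeasurableSet.iInter fun k => measurableSet_lt
      (measurable_const.add ?_) (measurable_const.add measurable_fst)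
    exact measurable_snd.eval
  have hMP : MeasurePreserving
      (fun u : V → ℝ => ((u j : ℝ), fun k : {k : V // ¬ k = j} => u k.1))
      (Measure.pi (fun _ : V => stdGumbel)) (stdGumbel.prod μ') := by
    have h1 := measurePreserving_piEquivPiSubtypeProd
      (fun _ : V => stdGumbel) (fun k => k = j)
    have h2 := (measurePreserving_piUnique
      (fun _ : {k : V // k = j} => stdGumbel)).prod (MeasurePreserving.id μ')
    exact h2.comp h1
  have hTS : T = (fun u : V → ℝ =>
      ((u j : ℝ), fun k : {k : V // ¬ k = j} => u k.1)) ⁻¹' S₂ := by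
    ext u
    simp only [hT, hS₂, Set.mem_preimage, Set.mem_setOf_eq]
    exact ⟨fun h k => h k.1 k.2, fun h k hk => h ⟨k, hk⟩⟩
  rw [hTS, hMP.measure_preimage hS₂meas.nullMeasurableSet]
  -- step 4: Fubini
  rw [Measure.prod_apply hS₂meas]
  have hslice : ∀ x : ℝ, (Prod.mk x ⁻¹' S₂) =
      Set.univ.pi (fun k : {k : V // ¬ k = j} =>
        Iio (Real.log (p j) + x - Real.log (p k.1))) := by
    intro x
    ext b
    simp only [hS₂, Set.mem_preimage, Set.mem_setOf_eq, Set.mem_univ_pi, Set.mem_Iio]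
    constructor
    · intro h k; have := h k; linarith
    · intro h k; have := h k; linarith
  have hc' : 0 < (1 - p j) / p j + 1 := by
    have h1 : p j ≤ 1 := by
      rw [← hps]
      exact Finset.single_le_sum (fun k _ => (hp k).le) (Finset.mem_univ j)
    have h2 := hp j
    have h3 : 0 ≤ (1 - p j) / p j := div_nonneg (by linarith) h2.le
    linarith
  have hsum : ∑ k : {k : V // ¬ k = j}, p k.1 = 1 - p j := by
    rw [← Finset.sum_subtype (Finset.univ.erase j)
      (fun x => by simp [Finset.mem_erase]) p,
      Finset.sum_erase_eq_sub (Finset.mem_univ j), hps]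
  have hslice_meas : ∀ x : ℝ, μ' (Prod.mk x ⁻¹' S₂) =
      ENNReal.ofReal (Real.exp (-(((1 - p j) / p j) * Real.exp (-x)))) := by
    intro x
    rw [hslice x, hμ', Measure.pi_pi]
    have : ∀ k : {k : V // ¬ k = j},
        stdGumbel (Iio (Real.log (p j) + x - Real.log (p k.1)))
          = ENNReal.ofReal (Real.exp (-(p k.1 / p j * Real.exp (-x)))) := by
      intro k
      rw [stdGumbel_Iio]
      congr 2
      rw [show -(Real.log (p j) + x - Real.log (p k.1))
          = Real.log (p k.1) + (-Real.log (p j) + -x) by ring,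
        Real.exp_add, Real.exp_log (hp k.1), Real.exp_add, Real.exp_neg,
        Real.exp_log (hp j)]
      ring
    rw [Finset.prod_congr rfl (fun k _ => this k),
      ← ENNReal.ofReal_prod_of_nonneg (fun k _ => (Real.exp_pos _).le),
      ← Real.exp_sum]
    congr 2
    have heq : ∑ k : {k : V // ¬ k = j}, -(p k.1 / p j * Real.exp (-x))
        = -((∑ k : {k : V // ¬ k = j}, p k.1) / p j * Real.exp (-x)) := by
      rw [Finset.sum_div, Finset.sum_mul]
      simp
    rw [heq, hsum]
  have hd : Measurable fun x : ℝ => ENNReal.ofReal (Real.exp (-x - Real.exp (-x))) :=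
    (Measurable.exp (measurable_neg.sub measurable_neg.exp)).ennreal_ofReal
  have hg : Measurable fun x : ℝ =>
      ENNReal.ofReal (Real.exp (-((1 - p j) / p j * Real.exp (-x)))) :=
    (Measurable.exp ((measurable_neg.exp.const_mul _).neg)).ennreal_ofReal
  rw [lintegral_congr hslice_meas, stdGumbel,
    lintegral_withDensity_eq_lintegral_mul volume hd hg]
  have hpt : ∀ x : ℝ,
      ((fun x => ENNReal.ofReal (Real.exp (-x - Real.exp (-x)))) *
        fun x => ENNReal.ofReal (Real.exp (-((1 - p j) / p j * Real.exp (-x))))) x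
      = ENNReal.ofReal (Real.exp (-x) *
          Real.exp (-(((1 - p j) / p j + 1) * Real.exp (-x)))) := by
    intro x
    rw [Pi.mul_apply, ← ENNReal.ofReal_mul (Real.exp_pos _).le]
    congr 1
    rw [← Real.exp_add, ← Real.exp_add]
    ring_nf
  rw [lintegral_congr hpt, gm_lintegral_ofReal _ hc']
  congr 1
  have hpj : p j ≠ 0 := (hp j).ne'
  have h1 : (1 - p j) / p j + 1 = 1 / p j := by field_simp; ring
  rw [h1, one_div_one_div]
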